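/- Let ρ ≤ 1/(8 l_{g,1}) and σ₀ l_{f,1} ≤ l_{g,1}. For any x ∈ X, any y ∈ ℝ^{d_y}, and any σ₁, σ₂ ∈ [0, σ₀], the proximal map is Lipschitz in the penalty parameter: ‖prox_{ρ h_{σ₁}(x,·)}(y) − prox_{ρ h_{σ₂}(x,·)}(y)‖ ≤ 3 ρ l_{f,0} |σ₁ − σ₂|. -/

import Mathlib

open Set Metric

/-- Descent lemma (lower bound form) for a function with Lipschitz derivative. -/
lemma descent_aux {E : Type*} [NormedAddCommGroup E] [NormedSpace ℝ E]
    {k : E → ℝ} (hk : Differentiable ℝ k) {L : ℝ}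
    (hL : ∀ p q : E, ‖fderiv ℝ k p - fderiv ℝ k q‖ ≤ L * ‖p - q‖) (a b : E) :
    k a + fderiv ℝ k a (b - a) - L / 2 * ‖b - a‖ ^ 2 ≤ k b := by
  set v := b - a with hv
  set w : ℝ → ℝ := fun t => k (a + t • v) - t * (fderiv ℝ k a v) + L * ‖v‖ ^ 2 / 2 * t ^ 2
    with hw
  have hwd : ∀ t : ℝ, HasDerivAt w
      ((fderiv ℝ k (a + t • v)) v - fderiv ℝ k a v + L * ‖v‖ ^ 2 * t) t := by
    intro t
    have h1 : HasDerivAt (fun t : ℝ => a + t • v) v t := by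
      simpa using ((hasDerivAt_id t).smul_const v).const_add a
    have h2 : HasDerivAt (fun t : ℝ => k (a + t • v)) ((fderiv ℝ k (a + t • v)) v) t :=
      (hk (a + t • v)).hasFDerivAt.comp_hasDerivAt t h1
    have h3 : HasDerivAt (fun t : ℝ => t * (fderiv ℝ k a v)) (fderiv ℝ k a v) t := by
      simpa using (hasDerivAt_id t).mul_const (fderiv ℝ k a v)
    have h4 : HasDerivAt (fun t : ℝ => L * ‖v‖ ^ 2 / 2 * t ^ 2) (L * ‖v‖ ^ 2 * t) t := by
      have := (hasDerivAt_pow 2 t).const_mul (L * ‖v‖ ^ 2 / 2)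
      exact this.congr_deriv (by push_cast; ring)
    exact (h2.sub h3).add h4
  have hmono : MonotoneOn w (Set.Icc (0:ℝ) 1) := by
    apply monotoneOn_of_deriv_nonneg (convex_Icc 0 1)
    · exact fun t _ => ((hwd t).continuousAt).continuousWithinAt
    · exact fun t _ => ((hwd t).differentiableAt).differentiableWithinAt
    · intro t ht
      rw [interior_Icc] at ht
      rw [(hwd t).deriv]
      have h5 : ‖fderiv ℝ k (a + t • v) - fderiv ℝ k a‖ ≤ L * (t * ‖v‖) := by
        have := hL (a + t • v) a
        simpa [norm_smul, abs_of_nonneg ht.1.le] using this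
      have h6 : ‖(fderiv ℝ k (a + t • v) - fderiv ℝ k a) v‖ ≤ L * (t * ‖v‖) * ‖v‖ :=
        le_trans ((fderiv ℝ k (a + t • v) - fderiv ℝ k a).le_opNorm v)
          (mul_le_mul_of_nonneg_right h5 (norm_nonneg v))
      have h7 : |(fderiv ℝ k (a + t • v)) v - fderiv ℝ k a v| ≤ L * (t * ‖v‖) * ‖v‖ := by
        simpa [Real.norm_eq_abs] using h6
      have h8 := (abs_le.mp h7).1
      nlinarith [h8]
  have h01 : w 0 ≤ w 1 := hmono (by norm_num) (by norm_num) (by norm_num)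
  have hw0 : w 0 = k a := by simp [hw]
  have hw1 : w 1 = k (a + v) - fderiv ℝ k a v + L * ‖v‖ ^ 2 / 2 := by simp [hw]
  have hab : a + v = b := by rw [hv]; abel
  rw [hw0, hw1, hab] at h01
  linarith

/-- Midpoint inequality for a function with Lipschitz derivative. -/
lemma midpoint_aux {E : Type*} [NormedAddCommGroup E] [NormedSpace ℝ E]
    {k : E → ℝ} (hk : Differentiable ℝ k) {L : ℝ}
    (hL : ∀ p q : E, ‖fderiv ℝ k p - fderiv ℝ k q‖ ≤ L * ‖p - q‖) (a b : E) :
    2 * k ((1/2 : ℝ) • (a + b)) - L / 4 * ‖b - a‖ ^ 2 ≤ k a + k b := by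
  set m := (1/2 : ℝ) • (a + b) with hm
  have h1 := descent_aux hk hL m a
  have h2 := descent_aux hk hL m b
  have e1 : a - m = (1/2 : ℝ) • (a - b) := by rw [hm]; module
  have e2 : b - m = -((1/2 : ℝ) • (a - b)) := by rw [hm]; module
  have e3 : fderiv ℝ k m (a - m) + fderiv ℝ k m (b - m) = 0 := by
    rw [← map_add]
    have : a - m + (b - m) = 0 := by rw [hm]; module
    rw [this, map_zero]
  have n1 : ‖a - m‖ ^ 2 = ‖b - a‖ ^ 2 / 4 := by
    rw [e1, norm_smul, ← norm_neg (a - b), neg_sub]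
    norm_num
    ring
  have n2 : ‖b - m‖ ^ 2 = ‖b - a‖ ^ 2 / 4 := by
    rw [e2, norm_neg, norm_smul, ← norm_neg (a - b), neg_sub]
    norm_num
    ring
  rw [n1] at h1
  rw [n2] at h2
  linarith


set_option maxHeartbeats 1000000 in
/-- Lipschitz dependence of the proximal map on the penalty parameter:
for `ρ ≤ 1/(8 l_{g,1})` and `σ₀ l_{f,1} ≤ l_{g,1}`,
`‖prox_{ρ h_{σ₁}(x,·)}(y) − prox_{ρ h_{σ₂}(x,·)}(y)‖ ≤ 3 ρ l_{f,0} |σ₁ − σ₂|`. -/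
theorem stmt11
    (dx dy : ℕ)
    (X : Set (EuclideanSpace ℝ (Fin dx)))
    (Y : Set (EuclideanSpace ℝ (Fin dy)))
    (hXne : X.Nonempty) (hXclosed : IsClosed X) (hXconv : Convex ℝ X)
    (hYne : Y.Nonempty) (hYclosed : IsClosed Y) (hYconv : Convex ℝ Y)
    (hYbdd : Bornology.IsBounded Y)
    (f g : EuclideanSpace ℝ (Fin dx) → EuclideanSpace ℝ (Fin dy) → ℝ)
    (lf0 lf1 lg1 σ₀ ρ : ℝ)
    (hfC2 : ContDiff ℝ 2 (Function.uncurry f))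
    (hgC2 : ContDiff ℝ 2 (Function.uncurry g))
    (hLipf : ∀ p q : EuclideanSpace ℝ (Fin dx) × EuclideanSpace ℝ (Fin dy),
      ‖fderiv ℝ (Function.uncurry f) p - fderiv ℝ (Function.uncurry f) q‖ ≤ lf1 * ‖p - q‖)
    (hLipg : ∀ p q : EuclideanSpace ℝ (Fin dx) × EuclideanSpace ℝ (Fin dy),
      ‖fderiv ℝ (Function.uncurry g) p - fderiv ℝ (Function.uncurry g) q‖ ≤ lg1 * ‖p - q‖)
    (hlf0 : ∀ x ∈ X, ∀ y ∈ Y, ‖gradient (fun y' => f x y') y‖ ≤ lf0)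
    (hρpos : 0 < ρ) (hρ : ρ ≤ 1 / (8 * lg1))
    (hσ₀ : 0 ≤ σ₀) (hσ₀l : σ₀ * lf1 ≤ lg1)
    -- `proxh x σ y` is the unique minimizer over `z ∈ Y` of `ρ h_σ(x,z) + ‖z − y‖²/2`
    (proxh : EuclideanSpace ℝ (Fin dx) → ℝ → EuclideanSpace ℝ (Fin dy) → EuclideanSpace ℝ (Fin dy))
    (hproxh : ∀ x (σ : ℝ), σ ∈ Icc 0 σ₀ → ∀ y, proxh x σ y ∈ Y ∧ ∀ z ∈ Y,
      ρ * (σ * f x (proxh x σ y) + g x (proxh x σ y)) + ‖proxh x σ y - y‖ ^ 2 / 2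
        ≤ ρ * (σ * f x z + g x z) + ‖z - y‖ ^ 2 / 2) :
    ∀ x ∈ X, ∀ y : EuclideanSpace ℝ (Fin dy), ∀ σ₁ ∈ Icc (0:ℝ) σ₀, ∀ σ₂ ∈ Icc (0:ℝ) σ₀,
      ‖proxh x σ₁ y - proxh x σ₂ y‖ ≤ 3 * ρ * lf0 * |σ₁ - σ₂| := by
  intro x hx y σ₁ hσ₁ σ₂ hσ₂
  obtain ⟨y₀, hy₀⟩ := hYne
  have hlf0nn : 0 ≤ lf0 := le_trans (norm_nonneg _) (hlf0 x hx y₀ hy₀)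
  have hlg1pos : 0 < lg1 := by
    by_contra h
    push_neg at h
    rcases eq_or_lt_of_le h with h' | h'
    · rw [h'] at hρ
      norm_num at hρ
      linarith
    · have h8 : 8 * lg1 < 0 := by linarith
      have : 1 / (8 * lg1) < 0 := div_neg_of_pos_of_neg one_pos h8
      linarith
  have hρlg : ρ * lg1 ≤ 1 / 8 := by
    have h8 : (0:ℝ) < 8 * lg1 := by linarith
    rw [le_div_iff₀ h8] at hρ
    nlinarith
  have hσl : ∀ σ ∈ Icc (0:ℝ) σ₀, σ * lf1 ≤ lg1 := by
    intro σ hσ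
    rcases le_or_gt 0 lf1 with h | h
    · nlinarith [hσ.1, hσ.2]
    · nlinarith [hσ.1]
  have hfd : Differentiable ℝ (Function.uncurry f) := hfC2.differentiable (by norm_num)
  have hgd : Differentiable ℝ (Function.uncurry g) := hgC2.differentiable (by norm_num)
  set inr := ContinuousLinearMap.inr ℝ (EuclideanSpace ℝ (Fin dx))
    (EuclideanSpace ℝ (Fin dy)) with hinr
  have hfz : ∀ z : EuclideanSpace ℝ (Fin dy), HasFDerivAt (fun z => f x z)
      ((fderiv ℝ (Function.uncurry f) (x, z)).comp inr) z := fun z =>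
    ((hfd (x, z)).hasFDerivAt.comp z (hasFDerivAt_prodMk_right x z) :)
  have hgz : ∀ z : EuclideanSpace ℝ (Fin dy), HasFDerivAt (fun z => g x z)
      ((fderiv ℝ (Function.uncurry g) (x, z)).comp inr) z := fun z =>
    ((hgd (x, z)).hasFDerivAt.comp z (hasFDerivAt_prodMk_right x z) :)
  have hkz : ∀ σ : ℝ, ∀ z : EuclideanSpace ℝ (Fin dy),
      HasFDerivAt (fun z => σ * f x z + g x z)
      (σ • ((fderiv ℝ (Function.uncurry f) (x, z)).comp inr)
        + (fderiv ℝ (Function.uncurry g) (x, z)).comp inr) z := fun σ z =>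
    ((hfz z).const_mul σ).add (hgz z)
  have hkdiff : ∀ σ : ℝ, Differentiable ℝ (fun z => σ * f x z + g x z) := fun σ z =>
    (hkz σ z).differentiableAt
  have hprodnorm : ∀ p q : EuclideanSpace ℝ (Fin dy),
      ‖((x, p) : EuclideanSpace ℝ (Fin dx) × EuclideanSpace ℝ (Fin dy)) - (x, q)‖ = ‖p - q‖ := by
    intro p q
    have : ((x, p) : EuclideanSpace ℝ (Fin dx) × EuclideanSpace ℝ (Fin dy)) - (x, q)
        = (0, p - q) := by simp
    rw [this, Prod.norm_def]
    simp [max_eq_right (norm_nonneg _)]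
  have hLk : ∀ σ : ℝ, 0 ≤ σ → ∀ p q : EuclideanSpace ℝ (Fin dy),
      ‖fderiv ℝ (fun z => σ * f x z + g x z) p
      - fderiv ℝ (fun z => σ * f x z + g x z) q‖ ≤ (σ * lf1 + lg1) * ‖p - q‖ := by
    intro σ hσ p q
    rw [(hkz σ p).fderiv, (hkz σ q).fderiv]
    set Af := fderiv ℝ (Function.uncurry f) (x, p) - fderiv ℝ (Function.uncurry f) (x, q) with hAf
    set Ag := fderiv ℝ (Function.uncurry g) (x, p) - fderiv ℝ (Function.uncurry g) (x, q) with hAg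
    have hrw : σ • ((fderiv ℝ (Function.uncurry f) (x, p)).comp inr)
        + (fderiv ℝ (Function.uncurry g) (x, p)).comp inr
        - (σ • ((fderiv ℝ (Function.uncurry f) (x, q)).comp inr)
        + (fderiv ℝ (Function.uncurry g) (x, q)).comp inr)
        = (σ • Af + Ag).comp inr := by
      ext v
      simp [hAf, hAg, ContinuousLinearMap.comp_apply]
      ring
    rw [hrw]
    have hinrle : ‖inr‖ ≤ 1 := by
      apply ContinuousLinearMap.opNorm_le_bound _ zero_le_one
      intro v
      rw [hinr]
      simp [Prod.norm_def, max_eq_right (norm_nonneg _)]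
    have h1 : ‖(σ • Af + Ag).comp inr‖ ≤ ‖σ • Af + Ag‖ * ‖inr‖ :=
      ContinuousLinearMap.opNorm_comp_le _ _
    have h2 : ‖σ • Af + Ag‖ * ‖inr‖ ≤ ‖σ • Af + Ag‖ * 1 :=
      mul_le_mul_of_nonneg_left hinrle (norm_nonneg _)
    have h3 : ‖σ • Af + Ag‖ ≤ σ * ‖Af‖ + ‖Ag‖ := by
      calc ‖σ • Af + Ag‖ ≤ ‖σ • Af‖ + ‖Ag‖ := norm_add_le _ _
        _ = σ * ‖Af‖ + ‖Ag‖ := by rw [norm_smul, Real.norm_eq_abs, abs_of_nonneg hσ]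
    have h4 : ‖Af‖ ≤ lf1 * ‖p - q‖ := by
      have := hLipf (x, p) (x, q); rwa [hprodnorm] at this
    have h5 : ‖Ag‖ ≤ lg1 * ‖p - q‖ := by
      have := hLipg (x, p) (x, q); rwa [hprodnorm] at this
    have h6 : σ * ‖Af‖ ≤ σ * (lf1 * ‖p - q‖) := mul_le_mul_of_nonneg_left h4 hσ
    linarith [h1, h2, h3, h6, h5]
  -- Lipschitz bound for f on Y via the gradient bound
  have hfLipY : ∀ p ∈ Y, ∀ q ∈ Y, ‖f x p - f x q‖ ≤ lf0 * ‖p - q‖ := by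
    intro p hp q hq
    apply Convex.norm_image_sub_le_of_norm_hasFDerivWithin_le
      (f' := fun z => (fderiv ℝ (Function.uncurry f) (x, z)).comp inr)
      (fun z _ => (hfz z).hasFDerivWithinAt) ?_ hYconv hq hp
    intro z hz
    have hb := hlf0 x hx z hz
    have hgr : gradient (fun y' => f x y') z
        = (InnerProductSpace.toDual ℝ (EuclideanSpace ℝ (Fin dy))).symm
          (fderiv ℝ (fun y' => f x y') z) := rfl
    rw [hgr, LinearIsometryEquiv.norm_map, (hfz z).fderiv] at hb
    exact hb
  -- the two prox points
  obtain ⟨hz₁Y, hopt₁⟩ := hproxh x σ₁ hσ₁ y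
  obtain ⟨hz₂Y, hopt₂⟩ := hproxh x σ₂ hσ₂ y
  set z₁ := proxh x σ₁ y with hz1
  set z₂ := proxh x σ₂ y with hz2
  set m := (1/2 : ℝ) • (z₁ + z₂) with hmdef
  have hmY : m ∈ Y := by
    have := hYconv hz₁Y hz₂Y (by norm_num : (0:ℝ) ≤ 1/2) (by norm_num : (0:ℝ) ≤ 1/2)
      (by norm_num)
    rw [hmdef, smul_add]
    exact this
  set n := ‖z₁ - z₂‖ with hn
  have hnn : ‖z₂ - z₁‖ = n := by rw [hn, norm_sub_rev]
  have mid1 : 2 * (σ₁ * f x m + g x m) - (σ₁ * lf1 + lg1) / 4 * n ^ 2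
      ≤ (σ₁ * f x z₁ + g x z₁) + (σ₁ * f x z₂ + g x z₂) := by
    have := midpoint_aux (hkdiff σ₁) (hLk σ₁ hσ₁.1) z₁ z₂
    rw [hnn] at this
    exact this
  have mid2 : 2 * (σ₂ * f x m + g x m) - (σ₂ * lf1 + lg1) / 4 * n ^ 2
      ≤ (σ₂ * f x z₁ + g x z₁) + (σ₂ * f x z₂ + g x z₂) := by
    have := midpoint_aux (hkdiff σ₂) (hLk σ₂ hσ₂.1) z₁ z₂
    rw [hnn] at this
    exact this
  have par : ‖z₁ - y‖ ^ 2 + ‖z₂ - y‖ ^ 2 = 2 * ‖m - y‖ ^ 2 + n ^ 2 / 2 := by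
    have hpl := parallelogram_law_with_norm ℝ (z₁ - y) (z₂ - y)
    have e1 : z₁ - y + (z₂ - y) = (2:ℝ) • (m - y) := by rw [hmdef]; module
    have e2 : z₁ - y - (z₂ - y) = z₁ - z₂ := by abel
    rw [e1, e2] at hpl
    have e3 : ‖(2:ℝ) • (m - y)‖ = 2 * ‖m - y‖ := by
      rw [norm_smul, Real.norm_eq_abs]; norm_num
    rw [e3] at hpl
    rw [hn]
    ring_nf
    ring_nf at hpl
    linarith
  have o1 := hopt₁ m hmY
  have o2 := hopt₂ m hmY
  have hflipz : ‖f x z₂ - f x z₁‖ ≤ lf0 * ‖z₂ - z₁‖ := hfLipY z₂ hz₂Y z₁ hz₁Y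
  clear hproxh hLk hkz hfz hgz hkdiff hfd hgd hfC2 hgC2 hLipf hLipg hprodnorm hfLipY hopt₁ hopt₂ hlf0
  clear_value z₁ z₂ m n
  have mid1' := mul_le_mul_of_nonneg_left mid1 hρpos.le
  have mid2' := mul_le_mul_of_nonneg_left mid2 hρpos.le
  have μ1 : ρ * (σ₁ * lf1 + lg1) ≤ 1 / 4 := by
    have := mul_le_mul_of_nonneg_left (hσl σ₁ hσ₁) hρpos.le
    linarith [this, hρlg]
  have μ2 : ρ * (σ₂ * lf1 + lg1) ≤ 1 / 4 := by
    have := mul_le_mul_of_nonneg_left (hσl σ₂ hσ₂) hρpos.le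
    linarith [this, hρlg]
  have μ1n : ρ * (σ₁ * lf1 + lg1) * n ^ 2 ≤ 1 / 4 * n ^ 2 :=
    mul_le_mul_of_nonneg_right μ1 (sq_nonneg n)
  have μ2n : ρ * (σ₂ * lf1 + lg1) * n ^ 2 ≤ 1 / 4 * n ^ 2 :=
    mul_le_mul_of_nonneg_right μ2 (sq_nonneg n)
  have key : 3 / 8 * n ^ 2 ≤ ρ * (σ₁ - σ₂) * (f x z₂ - f x z₁) := by
    linarith [o1, o2, mid1', mid2', par, μ1n, μ2n]
  clear o1 o2 mid1 mid2 mid1' mid2' par μ1 μ2 μ1n μ2n hρ hρlg hσl hσ₀l hmY hYconv hYclosed hYbdd hXconv hXclosed hXne hx hy₀ hlg1pos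
  have habs : (σ₁ - σ₂) * (f x z₂ - f x z₁) ≤ |σ₁ - σ₂| * (lf0 * n) := by
    calc (σ₁ - σ₂) * (f x z₂ - f x z₁) ≤ |(σ₁ - σ₂) * (f x z₂ - f x z₁)| := le_abs_self _
      _ = |σ₁ - σ₂| * |f x z₂ - f x z₁| := abs_mul _ _
      _ ≤ |σ₁ - σ₂| * (lf0 * n) := by
          apply mul_le_mul_of_nonneg_left _ (abs_nonneg _)
          rw [Real.norm_eq_abs, hnn] at hflipz
          exact hflipz
  have key2 : 3 / 8 * n ^ 2 ≤ ρ * (|σ₁ - σ₂| * (lf0 * n)) := by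
    have := mul_le_mul_of_nonneg_left habs hρpos.le
    linarith [key, this]
  show n ≤ 3 * ρ * lf0 * |σ₁ - σ₂|
  have hn0 : 0 ≤ n := by rw [hn]; exact norm_nonneg _
  nlinarith [key2, hn0, mul_nonneg (mul_nonneg hρpos.le hlf0nn) (abs_nonneg (σ₁ - σ₂))]
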